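/- Under the hypotheses of the explicitly controlled product equation, the i-th element of eps n q equals 0 if l (q_t (zero sequence)) < n + i, and equals ε (n+i) (fun x => q_{t++[x]} (eps (n+i+1) (q_{t++[x]}))) otherwise, where t is the list of the first i elements of eps n q. -/

import Mathlib

/-- Prepend an element to an infinite sequence. -/
def seqCons {X : Type*} (x : X) (α : ℕ → X) : ℕ → X
  | 0 => x
  | n + 1 => α n

/-- Overwrite the initial segment of an infinite sequence with a finite list. -/
def listApp {X : Type*} (s : List X) (α : ℕ → X) : ℕ → X :=
  fun i => if h : i < s.length then s.get ⟨i, h⟩ else α (i - s.length)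

/-- The list of the first `n` values of an infinite sequence. -/
def firstN {X : Type*} (α : ℕ → X) (n : ℕ) : List X := (List.range n).map α

theorem listApp_nil {X : Type*} (α : ℕ → X) : listApp ([] : List X) α = α := by
  funext j; simp [listApp]

theorem listApp_cons {X : Type*} (c : X) (t : List X) (α : ℕ → X) :
    listApp (c :: t) α = seqCons c (listApp t α) := by
  funext j
  cases j with
  | zero => simp [listApp, seqCons]
  | succ k =>
    simp only [listApp, seqCons, List.length_cons, Nat.succ_lt_succ_iff, Nat.succ_sub_succ]
    split <;> simp_all

theorem firstN_seqCons {X : Type*} (c : X) (β : ℕ → X) (k : ℕ) :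
    firstN (seqCons c β) (k + 1) = c :: firstN β k := by
  simp only [firstN, List.range_succ_eq_map, List.map_cons, List.map_map]
  rfl

theorem listApp_const {X : Type*} (z : X) (k : ℕ) :
    listApp (firstN (fun _ => z) k) (fun _ => z) = fun _ => z := by
  funext j
  simp only [listApp, firstN]
  split_ifs <;> simp

theorem stmt3 {X R : Type*} (z : X) (l : R → ℕ) (ε : ℕ → (X → R) → X)
    (eps : ℕ → ((ℕ → X) → R) → (ℕ → X))
    (heps : ∀ n (q : (ℕ → X) → R),
      eps n q =
        if l (q (fun _ => z)) < n then (fun _ => z)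
        else
          let c := ε n (fun x => q (seqCons x (eps (n + 1) (fun α => q (seqCons x α)))))
          seqCons c (eps (n + 1) (fun α => q (seqCons c α)))) :
    ∀ (n : ℕ) (q : (ℕ → X) → R) (i : ℕ),
      eps n q i =
        (let t := firstN (eps n q) i
         if l (q (listApp t (fun _ => z))) < n + i then z
         else ε (n + i) (fun x =>
           q (listApp (t ++ [x])
              (eps (n + i + 1) (fun α => q (listApp (t ++ [x]) α)))))) :=  by
  intro n q i
  induction i generalizing n q with
  | zero =>
    rw [heps n q]
    simp only [firstN, List.range_zero, List.map_nil, listApp_nil, Nat.add_zero,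
      List.nil_append]
    split_ifs with h
    · rfl
    · simp only [seqCons, listApp_cons, listApp_nil]
  | succ i ih =>
    rw [heps n q]
    split_ifs with h
    · simp only [listApp_const]
      rw [if_pos (by omega)]
    · simp only
      set c := ε n fun x => q (seqCons x (eps (n + 1) fun α => q (seqCons x α))) with hc
      show eps (n + 1) (fun α => q (seqCons c α)) i = _
      rw [ih (n + 1) (fun α => q (seqCons c α))]
      simp only [firstN_seqCons, listApp_cons, List.cons_append,
        Nat.add_right_comm n 1 i]
      rfl
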